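/- With A SPD, S SPD, B, C full row rank and 𝒫, ℬ as defined, every eigenvalue of 𝒫⁻¹ℬ is real and nonzero, and each eigenvalue equals either 1 or (y* B A⁻¹ Bᵀ y)/(y* S y) for some nonzero y ∈ null(C). -/

import Mathlib

open Matrix

noncomputable section

/-- 3×3 block matrix with blocks of sizes n, m, l. -/
def blk3 {n m l : ℕ} (M11 : Matrix (Fin n) (Fin n) ℝ) (M12 : Matrix (Fin n) (Fin m) ℝ)
    (M13 : Matrix (Fin n) (Fin l) ℝ) (M21 : Matrix (Fin m) (Fin n) ℝ)
    (M22 : Matrix (Fin m) (Fin m) ℝ) (M23 : Matrix (Fin m) (Fin l) ℝ)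
    (M31 : Matrix (Fin l) (Fin n) ℝ) (M32 : Matrix (Fin l) (Fin m) ℝ)
    (M33 : Matrix (Fin l) (Fin l) ℝ) :
    Matrix (Fin n ⊕ (Fin m ⊕ Fin l)) (Fin n ⊕ (Fin m ⊕ Fin l)) ℝ :=
  fromBlocks M11 (fromCols M12 M13) (fromRows M21 M31) (fromBlocks M22 M23 M32 M33)

/-- μ ∈ ℂ is an eigenvalue of the real matrix M (viewed over ℂ). -/
def IsEig {k : Type*} [Fintype k] (M : Matrix k k ℝ) (μ : ℂ) : Prop :=
  ∃ v : k → ℂ, v ≠ 0 ∧ (M.map (fun x : ℝ => (x : ℂ))) *ᵥ v = μ • v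

namespace Stmt11Aux

/-- Cast a real mulVec through complexification. -/
lemma mulVec_cast {p q : ℕ} (M : Matrix (Fin p) (Fin q) ℝ) (v : Fin q → ℝ) :
    M.map (fun x : ℝ => (x : ℂ)) *ᵥ (fun i => (v i : ℂ)) = fun i => ((M *ᵥ v) i : ℂ) := by
  funext i
  simp only [mulVec, dotProduct, Matrix.map_apply]
  push_cast
  rfl

lemma dot_cast {q : ℕ} (u v : Fin q → ℝ) :
    (fun i => (u i : ℂ)) ⬝ᵥ (fun i => (v i : ℂ)) = ((u ⬝ᵥ v : ℝ) : ℂ) := by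
  simp only [dotProduct]
  push_cast
  rfl

/-- Real matrix applied to conjugate vector equals conjugate of application. -/
lemma mulVec_star {p q : ℕ} (M : Matrix (Fin p) (Fin q) ℝ) (v : Fin q → ℂ) :
    M.map (fun x : ℝ => (x : ℂ)) *ᵥ (star v) = star (M.map (fun x : ℝ => (x : ℂ)) *ᵥ v) := by
  funext i
  simp only [mulVec, dotProduct, Matrix.map_apply, Pi.star_apply, star_sum, star_mul',
    RCLike.star_def, Complex.conj_ofReal]

/-- rank = number of columns implies injectivity of mulVec over ℝ. -/
lemma mulVec_inj_of_rank {p q : ℕ} (M : Matrix (Fin p) (Fin q) ℝ) (h : M.rank = q) :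
    ∀ x : Fin q → ℝ, M *ᵥ x = 0 → x = 0 := by
  have hker : LinearMap.ker M.mulVecLin = ⊥ := by
    have h2 := M.mulVecLin.finrank_range_add_finrank_ker
    rw [Module.finrank_fin_fun] at h2
    have : Module.finrank ℝ (LinearMap.ker M.mulVecLin) = 0 := by
      have : M.rank = Module.finrank ℝ (LinearMap.range M.mulVecLin) := rfl
      omega
    exact Submodule.finrank_eq_zero.mp this
  intro x hx
  have : x ∈ LinearMap.ker M.mulVecLin := by
    simpa [LinearMap.mem_ker, Matrix.mulVecLin_apply] using hx
  simpa [hker] using this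

/-- Complex version of injectivity. -/
lemma mulVec_inj_of_rank_c {p q : ℕ} (M : Matrix (Fin p) (Fin q) ℝ) (h : M.rank = q)
    (z : Fin q → ℂ) (hz : M.map (fun x : ℝ => (x : ℂ)) *ᵥ z = 0) : z = 0 := by
  set a : Fin q → ℝ := fun i => (z i).re with ha
  set b : Fin q → ℝ := fun i => (z i).im with hb
  have hzdec : z = (fun i => (a i : ℂ)) + Complex.I • (fun i => (b i : ℂ)) := by
    funext i
    simp only [Pi.add_apply, Pi.smul_apply, smul_eq_mul, ha, hb]
    rw [mul_comm]
    exact (Complex.re_add_im (z i)).symm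
  rw [hzdec, mulVec_add, mulVec_smul, mulVec_cast, mulVec_cast] at hz
  have hare : ∀ i, (M *ᵥ a) i = 0 ∧ (M *ᵥ b) i = 0 := by
    intro i
    have := congrFun hz i
    simp only [Pi.add_apply, Pi.smul_apply, smul_eq_mul, Pi.zero_apply] at this
    constructor
    · simpa using congrArg Complex.re this
    · simpa using congrArg Complex.im this
  have ha0 : a = 0 := mulVec_inj_of_rank M h a (funext fun i => (hare i).1)
  have hb0 : b = 0 := mulVec_inj_of_rank M h b (funext fun i => (hare i).2)
  rw [hzdec, ha0, hb0]
  funext i; simp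

/-- Sandwich positivity. -/
lemma sandwich {p q : ℕ} {M : Matrix (Fin q) (Fin q) ℝ} (hM : M.PosDef)
    (N : Matrix (Fin p) (Fin q) ℝ) (hN : ∀ x : Fin p → ℝ, Nᵀ *ᵥ x = 0 → x = 0) :
    (N * M * Nᵀ).PosDef := by
  have hsym : Mᵀ = M := hM.1
  refine posDef_iff_dotProduct_mulVec.mpr ⟨?_, ?_⟩
  · show (N * M * Nᵀ)ᴴ = N * M * Nᵀ
    rw [conjTranspose_mul, conjTranspose_mul]
    simp only [conjTranspose_eq_transpose_of_trivial, transpose_transpose, hsym]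
    rw [Matrix.mul_assoc]
  · intro x hx
    have hNx : Nᵀ *ᵥ x ≠ 0 := fun hcon => hx (hN x hcon)
    have := hM.dotProduct_mulVec_pos hNx
    rw [star_trivial] at this ⊢
    have heq : x ⬝ᵥ (N * M * Nᵀ) *ᵥ x = (Nᵀ *ᵥ x) ⬝ᵥ M *ᵥ (Nᵀ *ᵥ x) := by
      rw [← mulVec_mulVec, ← mulVec_mulVec, dotProduct_mulVec x N, ← mulVec_transpose]
    rw [heq]
    exact this

/-- Complexified quadratic form of a real PosDef matrix is a positive real. -/
lemma quadform_pos {q : ℕ} {M : Matrix (Fin q) (Fin q) ℝ} (hM : M.PosDef)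
    {z : Fin q → ℂ} (hz : z ≠ 0) :
    ∃ r : ℝ, 0 < r ∧ star z ⬝ᵥ (M.map (fun x : ℝ => (x : ℂ)) *ᵥ z) = (r : ℂ) := by
  set a : Fin q → ℝ := fun i => (z i).re with ha
  set b : Fin q → ℝ := fun i => (z i).im with hb
  have hsym : Mᵀ = M := hM.1
  have hzdec : z = (fun i => (a i : ℂ)) + Complex.I • (fun i => (b i : ℂ)) := by
    funext i
    simp only [Pi.add_apply, Pi.smul_apply, smul_eq_mul, ha, hb]
    rw [mul_comm]
    exact (Complex.re_add_im (z i)).symm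
  have hstar : star z = (fun i => (a i : ℂ)) + (-Complex.I) • (fun i => (b i : ℂ)) := by
    rw [hzdec]
    funext i
    simp [Complex.conj_ofReal]
  have hswap : a ⬝ᵥ (M *ᵥ b) = b ⬝ᵥ (M *ᵥ a) := by
    rw [dotProduct_mulVec, ← mulVec_transpose, hsym, dotProduct_comm]
  refine ⟨a ⬝ᵥ (M *ᵥ a) + b ⬝ᵥ (M *ᵥ b), ?_, ?_⟩
  · have hab : a ≠ 0 ∨ b ≠ 0 := by
      by_contra hcon
      push_neg at hcon
      apply hz
      rw [hzdec, hcon.1, hcon.2]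
      funext i; simp
    rcases hab with h1 | h1
    · have hp := hM.dotProduct_mulVec_pos h1
      rw [star_trivial] at hp
      have hq := hM.posSemidef.dotProduct_mulVec_nonneg b
      rw [star_trivial] at hq
      linarith
    · have hp := hM.dotProduct_mulVec_pos h1
      rw [star_trivial] at hp
      have hq := hM.posSemidef.dotProduct_mulVec_nonneg a
      rw [star_trivial] at hq
      linarith
  · conv_lhs => rw [hstar, hzdec]
    rw [mulVec_add, mulVec_smul, mulVec_cast, mulVec_cast]
    rw [add_dotProduct, smul_dotProduct, dotProduct_add, dotProduct_add,
      dotProduct_smul, dotProduct_smul, dot_cast, dot_cast, dot_cast, dot_cast]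
    rw [hswap]
    simp only [smul_eq_mul]
    push_cast
    linear_combination (-((b ⬝ᵥ M *ᵥ b : ℝ) : ℂ)) * Complex.I_sq


section Main

lemma cf_eq : (fun x : ℝ => (x : ℂ)) = ⇑Complex.ofRealHom := rfl

lemma fromColumns_map' {p q r : ℕ} (A : Matrix (Fin p) (Fin q) ℝ) (B : Matrix (Fin p) (Fin r) ℝ)
    (f : ℝ → ℂ) : (fromCols A B).map f = fromCols (A.map f) (B.map f) := by
  ext i (j | j) <;> rfl

lemma fromRows_map' {p q r : ℕ} (A : Matrix (Fin q) (Fin p) ℝ) (B : Matrix (Fin r) (Fin p) ℝ)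
    (f : ℝ → ℂ) : (fromRows A B).map f = fromRows (A.map f) (B.map f) := by
  ext (i | i) j <;> rfl

lemma fromRows_zero'' {α : Type*} [Zero α] {p q r : ℕ} :
    (fromRows (0 : Matrix (Fin q) (Fin p) α) (0 : Matrix (Fin r) (Fin p) α)) = 0 := by
  ext (i | i) j <;> rfl

lemma elim_add {α β : Type*} (a c : α → ℂ) (b d : β → ℂ) :
    Sum.elim a b + Sum.elim c d = Sum.elim (a + c) (b + d) := by
  funext i; cases i <;> rfl

lemma smul_elim {α β : Type*} (μ : ℂ) (a : α → ℂ) (b : β → ℂ) :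
    μ • Sum.elim a b = Sum.elim (μ • a) (μ • b) := by
  funext i; cases i <;> rfl

lemma map_neg' {p q : ℕ} (M : Matrix (Fin p) (Fin q) ℝ) :
    (-M).map ⇑Complex.ofRealHom = -(M.map ⇑Complex.ofRealHom) := by
  ext i j; simp

lemma map_zero' {p q : ℕ} :
    (0 : Matrix (Fin p) (Fin q) ℝ).map ⇑Complex.ofRealHom = 0 :=
  Matrix.map_zero _ (map_zero _)

end Main

end Stmt11Aux

set_option maxHeartbeats 1000000 in
open Matrix Stmt11Aux in
theorem stmt11 {n m l : ℕ} (A : Matrix (Fin n) (Fin n) ℝ) (B : Matrix (Fin m) (Fin n) ℝ)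
    (S : Matrix (Fin m) (Fin m) ℝ) (C : Matrix (Fin l) (Fin m) ℝ)
    (hA : A.PosDef) (hS : S.PosDef) (hB : B.rank = m) (hC : C.rank = l) :
    ∀ μ : ℂ, IsEig ((blk3 A Bᵀ 0 0 S (-Cᵀ) 0 C 0)⁻¹ * blk3 A Bᵀ 0 (-B) 0 (-Cᵀ) 0 C 0) μ →
      μ.im = 0 ∧ μ ≠ 0 ∧
      (μ = 1 ∨ ∃ y : Fin m → ℂ, y ≠ 0 ∧ (C.map (fun x : ℝ => (x : ℂ))) *ᵥ y = 0 ∧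
        μ = (star y ⬝ᵥ ((B * A⁻¹ * Bᵀ).map (fun x : ℝ => (x : ℂ)) *ᵥ y)) /
            (star y ⬝ᵥ (S.map (fun x : ℝ => (x : ℂ)) *ᵥ y))) := by
  intro μ hEig
  obtain ⟨v, hv0, hveq⟩ := hEig
  rw [cf_eq] at hveq
  -- real preliminaries
  have hBTinj := mulVec_inj_of_rank Bᵀ (by rw [Matrix.rank_transpose]; exact hB)
  have hCTinj := mulVec_inj_of_rank Cᵀ (by rw [Matrix.rank_transpose]; exact hC)
  have hQpos : (B * A⁻¹ * Bᵀ).PosDef := sandwich hA.inv B hBTinj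
  have hCSC : (C * S⁻¹ * Cᵀ).PosDef := sandwich hS.inv C hCTinj
  have hAdet : IsUnit A.det := isUnit_iff_ne_zero.mpr hA.det_pos.ne'
  have hPdet : IsUnit (blk3 A Bᵀ 0 0 S (-Cᵀ) 0 C 0).det := by
    have hD : (fromBlocks S (-Cᵀ) C (0 : Matrix (Fin l) (Fin l) ℝ)).det
        = S.det * (C * S⁻¹ * Cᵀ).det := by
      haveI : Invertible S := hS.isUnit.invertible
      rw [Matrix.det_fromBlocks₁₁]
      congr 1
      rw [Matrix.invOf_eq_nonsing_inv, zero_sub, Matrix.mul_neg, neg_neg]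
    have hPd : (blk3 A Bᵀ 0 0 S (-Cᵀ) 0 C 0).det
        = A.det * (S.det * (C * S⁻¹ * Cᵀ).det) := by
      unfold blk3
      rw [fromRows_zero'', Matrix.det_fromBlocks_zero₂₁, hD]
    rw [hPd]
    exact isUnit_iff_ne_zero.mpr
      (mul_pos hA.det_pos (mul_pos hS.det_pos hCSC.det_pos)).ne'
  -- complex machinery
  have hdet1 : ∀ (κ : Type) [Fintype κ] [DecidableEq κ] (M : Matrix κ κ ℝ),
      (M.map ⇑Complex.ofRealHom).det = Complex.ofRealHom M.det := fun κ _ _ M => by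
    rw [← RingHom.mapMatrix_apply, ← RingHom.map_det]
  have hinvmap : ∀ (κ : Type) [Fintype κ] [DecidableEq κ] (M : Matrix κ κ ℝ), IsUnit M.det →
      (M.map ⇑Complex.ofRealHom)⁻¹ = M⁻¹.map ⇑Complex.ofRealHom := by
    intro κ _ _ M hM
    apply Matrix.inv_eq_left_inv
    rw [← Matrix.map_mul, Matrix.nonsing_inv_mul M hM]
    exact Matrix.map_one _ (map_zero _) (map_one _)
  have hPdetC : IsUnit ((blk3 A Bᵀ 0 0 S (-Cᵀ) 0 C 0).map ⇑Complex.ofRealHom).det := by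
    rw [hdet1 _]
    exact isUnit_iff_ne_zero.mpr (by
      simpa [Complex.ofReal_eq_zero] using hPdet.ne_zero)
  rw [Matrix.map_mul, ← hinvmap _ _ hPdet] at hveq
  have hBv : ((blk3 A Bᵀ 0 (-B) 0 (-Cᵀ) 0 C 0).map ⇑Complex.ofRealHom) *ᵥ v
      = μ • (((blk3 A Bᵀ 0 0 S (-Cᵀ) 0 C 0).map ⇑Complex.ofRealHom) *ᵥ v) := by
    have h1 := congrArg
      (fun w => ((blk3 A Bᵀ 0 0 S (-Cᵀ) 0 C 0).map ⇑Complex.ofRealHom) *ᵥ w) hveq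
    simp only [Matrix.mulVec_mulVec] at h1
    rw [← Matrix.mul_assoc, Matrix.mul_nonsing_inv _ hPdetC, Matrix.one_mul,
      Matrix.mulVec_smul] at h1
    exact h1
  -- decompose v
  set x := fun i => v (Sum.inl i) with hxdef
  set y := fun i => v (Sum.inr (Sum.inl i)) with hydef
  set z := fun i => v (Sum.inr (Sum.inr i)) with hzdef
  have hvelim : v = Sum.elim x (Sum.elim y z) := by
    funext i
    rcases i with i | i
    · rfl
    · rcases i with i | i <;> rfl
  have hmapP : (blk3 A Bᵀ 0 0 S (-Cᵀ) 0 C 0).map ⇑Complex.ofRealHom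
      = fromBlocks (A.map ⇑Complex.ofRealHom)
          (fromCols ((B.map ⇑Complex.ofRealHom)ᵀ) 0) 0
          (fromBlocks (S.map ⇑Complex.ofRealHom) (-(C.map ⇑Complex.ofRealHom)ᵀ)
            (C.map ⇑Complex.ofRealHom) 0) := by
    unfold blk3
    rw [Matrix.fromBlocks_map, fromColumns_map', fromRows_map', Matrix.fromBlocks_map]
    simp only [map_neg', Matrix.transpose_map, map_zero', fromRows_zero'']
  have hmapBm : (blk3 A Bᵀ 0 (-B) 0 (-Cᵀ) 0 C 0).map ⇑Complex.ofRealHom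
      = fromBlocks (A.map ⇑Complex.ofRealHom)
          (fromCols ((B.map ⇑Complex.ofRealHom)ᵀ) 0)
          (fromRows (-(B.map ⇑Complex.ofRealHom)) 0)
          (fromBlocks 0 (-(C.map ⇑Complex.ofRealHom)ᵀ)
            (C.map ⇑Complex.ofRealHom) 0) := by
    unfold blk3
    rw [Matrix.fromBlocks_map, fromColumns_map', fromRows_map', Matrix.fromBlocks_map]
    simp only [map_neg', Matrix.transpose_map, map_zero', fromRows_zero'']
  have hPv : ((blk3 A Bᵀ 0 0 S (-Cᵀ) 0 C 0).map ⇑Complex.ofRealHom) *ᵥ v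
      = Sum.elim ((A.map ⇑Complex.ofRealHom) *ᵥ x + (B.map ⇑Complex.ofRealHom)ᵀ *ᵥ y)
          (Sum.elim ((S.map ⇑Complex.ofRealHom) *ᵥ y + (-(C.map ⇑Complex.ofRealHom)ᵀ) *ᵥ z)
            ((C.map ⇑Complex.ofRealHom) *ᵥ y)) := by
    rw [hmapP, hvelim, Matrix.fromBlocks_mulVec]
    simp only [Sum.elim_comp_inl, Sum.elim_comp_inr]
    rw [Matrix.fromCols_mulVec_sumElim, Matrix.fromBlocks_mulVec]
    simp only [Sum.elim_comp_inl, Sum.elim_comp_inr, Matrix.zero_mulVec, add_zero, zero_add]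
  have hBmv : ((blk3 A Bᵀ 0 (-B) 0 (-Cᵀ) 0 C 0).map ⇑Complex.ofRealHom) *ᵥ v
      = Sum.elim ((A.map ⇑Complex.ofRealHom) *ᵥ x + (B.map ⇑Complex.ofRealHom)ᵀ *ᵥ y)
          (Sum.elim ((-(B.map ⇑Complex.ofRealHom)) *ᵥ x
              + (-(C.map ⇑Complex.ofRealHom)ᵀ) *ᵥ z)
            ((C.map ⇑Complex.ofRealHom) *ᵥ y)) := by
    rw [hmapBm, hvelim, Matrix.fromBlocks_mulVec]
    simp only [Sum.elim_comp_inl, Sum.elim_comp_inr]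
    rw [Matrix.fromCols_mulVec_sumElim, Matrix.fromBlocks_mulVec, Matrix.fromRows_mulVec,
      elim_add]
    simp only [Sum.elim_comp_inl, Sum.elim_comp_inr, Matrix.zero_mulVec, add_zero, zero_add]
  rw [hPv, hBmv, smul_elim, smul_elim] at hBv
  have E1 : (A.map ⇑Complex.ofRealHom) *ᵥ x + (B.map ⇑Complex.ofRealHom)ᵀ *ᵥ y
      = μ • ((A.map ⇑Complex.ofRealHom) *ᵥ x + (B.map ⇑Complex.ofRealHom)ᵀ *ᵥ y) := by
    funext i; exact congrFun hBv (Sum.inl i)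
  have E2 : (-(B.map ⇑Complex.ofRealHom)) *ᵥ x + (-(C.map ⇑Complex.ofRealHom)ᵀ) *ᵥ z
      = μ • ((S.map ⇑Complex.ofRealHom) *ᵥ y + (-(C.map ⇑Complex.ofRealHom)ᵀ) *ᵥ z) := by
    funext i; exact congrFun hBv (Sum.inr (Sum.inl i))
  have E3 : (C.map ⇑Complex.ofRealHom) *ᵥ y = μ • ((C.map ⇑Complex.ofRealHom) *ᵥ y) := by
    funext i; exact congrFun hBv (Sum.inr (Sum.inr i))
  by_cases hmu1 : μ = 1
  · exact ⟨by simp [hmu1], by simp [hmu1], Or.inl hmu1⟩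
  have hsub : (1 : ℂ) - μ ≠ 0 := sub_ne_zero.mpr (Ne.symm hmu1)
  have fix : ∀ {κ : Type} (w : κ → ℂ), w = μ • w → w = 0 := by
    intro κ w hw
    have h2 : (1 - μ) • w = 0 := by
      rw [sub_smul, one_smul, ← hw, sub_self]
    rcases smul_eq_zero.mp h2 with h | h
    · exact absurd h hsub
    · exact h
  have h1 : (A.map ⇑Complex.ofRealHom) *ᵥ x + (B.map ⇑Complex.ofRealHom)ᵀ *ᵥ y = 0 := fix _ E1
  have h3 : (C.map ⇑Complex.ofRealHom) *ᵥ y = 0 := fix _ E3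
  have hy0 : y ≠ 0 := by
    intro hy'
    have hxA : (A.map ⇑Complex.ofRealHom) *ᵥ x = 0 := by
      have h1' := h1
      rw [hy', Matrix.mulVec_zero, add_zero] at h1'
      exact h1'
    have hx0 : x = 0 := by
      by_contra hxne
      obtain ⟨r, hr, hq⟩ := quadform_pos hA hxne
      rw [cf_eq, hxA, dotProduct_zero] at hq
      exact hr.ne' (by exact_mod_cast hq.symm)
    have hCz : (C.map ⇑Complex.ofRealHom)ᵀ *ᵥ z = 0 := by
      have hE2' := E2
      simp only [hx0, hy', Matrix.mulVec_zero, zero_add] at hE2'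
      have := fix _ hE2'
      rwa [Matrix.neg_mulVec, neg_eq_zero] at this
    have hz0 : z = 0 := by
      apply mulVec_inj_of_rank_c Cᵀ (by rw [Matrix.rank_transpose]; exact hC)
      rw [cf_eq, Matrix.transpose_map]
      exact hCz
    apply hv0
    rw [hvelim, hx0, hy', hz0]
    funext i
    rcases i with i | i
    · rfl
    · rcases i with i | i <;> rfl
  have hCy : (C.map fun x : ℝ => (x : ℂ)) *ᵥ y = 0 := by rw [cf_eq]; exact h3
  have hAdetC : IsUnit ((A.map ⇑Complex.ofRealHom)).det := by
    rw [hdet1 _]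
    exact isUnit_iff_ne_zero.mpr (by
      simpa [Complex.ofReal_eq_zero] using hA.det_pos.ne')
  have hxeq : (A.map ⇑Complex.ofRealHom) *ᵥ x = -((B.map ⇑Complex.ofRealHom)ᵀ *ᵥ y) :=
    eq_neg_of_add_eq_zero_left h1
  have hmapQ : (B * A⁻¹ * Bᵀ).map ⇑Complex.ofRealHom
      = (B.map ⇑Complex.ofRealHom) * (A.map ⇑Complex.ofRealHom)⁻¹
        * (B.map ⇑Complex.ofRealHom)ᵀ := by
    rw [Matrix.map_mul, Matrix.map_mul, hinvmap _ A hAdet, Matrix.transpose_map]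
  have hQy : (B * A⁻¹ * Bᵀ).map ⇑Complex.ofRealHom *ᵥ y
      = (B.map ⇑Complex.ofRealHom) *ᵥ (-x) := by
    rw [hmapQ, ← Matrix.mulVec_mulVec, ← Matrix.mulVec_mulVec]
    have hBy : (B.map ⇑Complex.ofRealHom)ᵀ *ᵥ y = -((A.map ⇑Complex.ofRealHom) *ᵥ x) := by
      rw [hxeq, neg_neg]
    rw [hBy, Matrix.mulVec_neg, Matrix.mulVec_mulVec, Matrix.nonsing_inv_mul _ hAdetC,
      Matrix.one_mulVec, Matrix.mulVec_neg]
  have hCtz : star y ⬝ᵥ ((-(C.map ⇑Complex.ofRealHom)ᵀ) *ᵥ z) = 0 := by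
    rw [Matrix.neg_mulVec, dotProduct_neg, neg_eq_zero, Matrix.dotProduct_mulVec,
      Matrix.vecMul_transpose]
    have hCsy : (C.map ⇑Complex.ofRealHom) *ᵥ star y = 0 := by
      have := mulVec_star C y
      rw [cf_eq] at this
      rw [this, h3, star_zero]
    rw [hCsy, zero_dotProduct]
  have hkey : star y ⬝ᵥ ((B * A⁻¹ * Bᵀ).map ⇑Complex.ofRealHom *ᵥ y)
      = μ * (star y ⬝ᵥ ((S.map ⇑Complex.ofRealHom) *ᵥ y)) := by
    have hdot := congrArg (fun w => star y ⬝ᵥ w) E2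
    simp only [dotProduct_add, dotProduct_smul, smul_eq_mul, hCtz, add_zero, mul_add,
      mul_zero] at hdot
    rw [hQy, Matrix.mulVec_neg, ← Matrix.neg_mulVec]
    exact hdot
  obtain ⟨qv, hqpos, hq⟩ := quadform_pos hQpos hy0
  obtain ⟨sv, hspos, hs⟩ := quadform_pos hS hy0
  rw [cf_eq] at hq hs
  rw [hq, hs] at hkey
  have hsne : ((sv : ℝ) : ℂ) ≠ 0 := by exact_mod_cast hspos.ne'
  have hmu : μ = ((qv / sv : ℝ) : ℂ) := by
    rw [Complex.ofReal_div, eq_div_iff hsne]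
    exact hkey.symm
  refine ⟨by rw [hmu]; exact Complex.ofReal_im _,
    by rw [hmu]; exact_mod_cast (div_pos hqpos hspos).ne', Or.inr ⟨y, hy0, hCy, ?_⟩⟩
  rw [cf_eq, hq, hs, hmu, Complex.ofReal_div]
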